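/- Fix i ∈ I and suppose G(λ) < ∞ and ∑_{x∈ℕ^I} x_i Φ(x) λ^x < ∞. Then the mean number of class-i jobs satisfies L_i = ( λ_i + ∑_{k ∈ K∖𝒦_i} μ_k ψ_k L_{i|−k} ) / ( M(K) − Λ(I) ). -/

import Mathlib

open scoped BigOperators

/-- The balance function of balanced fairness: `Φ(0) = 1` and
`Φ(x) = (∑_{i : x_i > 0} Φ(x - e_i)) / M(⋃_{i : x_i > 0} 𝒦_i)`. -/
noncomputable def Phi {I K : Type} [Fintype I] [DecidableEq I] [DecidableEq K]
    (μ : K → ℝ) (Ka : I → Finset K) (x : I → ℕ) : ℝ :=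
  if x = fun _ => 0 then 1
  else (∑ i ∈ (Finset.univ.filter (fun i => 0 < x i)).attach,
      Phi μ Ka (Function.update x i.1 (x i.1 - 1))) /
    (∑ k ∈ (Finset.univ.filter (fun i => 0 < x i)).biUnion Ka, μ k)
termination_by ∑ i, x i
decreasing_by
  have hi := i.2
  simp only [Finset.mem_filter] at hi
  apply Finset.sum_lt_sum
  · intro j _
    rcases eq_or_ne j i.1 with rfl | h
    · simp [Function.update_self]
    · rw [Function.update_of_ne h]
  · exact ⟨i.1, Finset.mem_univ i.1, by simp [Function.update_self]; omega⟩

/-- The normalization series `G(λ) = ∑_{x∈ℕ^I} Φ(x) λ^x` (as a real tsum). -/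
noncomputable def Gf {I K : Type} [Fintype I] [DecidableEq I] [DecidableEq K]
    (μ : K → ℝ) (Ka : I → Finset K) (lam : I → ℝ) : ℝ :=
  ∑' x : I → ℕ, Phi μ Ka x * ∏ i, lam i ^ x i

/-- The mean number of class-`i` jobs, `L_i = ψ ∑_{x∈ℕ^I} x_i Φ(x) λ^x`. -/
noncomputable def meanJobs {I K : Type} [Fintype I] [DecidableEq I] [DecidableEq K]
    (μ : K → ℝ) (Ka : I → Finset K) (lam : I → ℝ) (i : I) : ℝ :=
  (Gf μ Ka lam)⁻¹ * ∑' x : I → ℕ, (x i : ℝ) * Phi μ Ka x * ∏ j, lam j ^ x j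

/-- Arrival rates of the system with all traffic of classes assigned to server `k` removed. -/
def lamMinus {I K : Type} [DecidableEq K] (Ka : I → Finset K) (lam : I → ℝ) (k : K) :
    I → ℝ :=
  fun i => if k ∈ Ka i then 0 else lam i

section aux
variable {I K : Type} [Fintype I] [DecidableEq I] [DecidableEq K]

lemma Phi_zero (μ : K → ℝ) (Ka : I → Finset K) : Phi μ Ka (fun _ => 0) = 1 := by
  rw [Phi]; simp

lemma sum_update_lt (x : I → ℕ) (j : I) (h : 0 < x j) :
    ∑ m, Function.update x j (x j - 1) m < ∑ m, x m := by
  apply Finset.sum_lt_sum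
  · intro m _
    rcases eq_or_ne m j with rfl | hm
    · simp [Function.update_self]
    · rw [Function.update_of_ne hm]
  · exact ⟨j, Finset.mem_univ j, by simp [Function.update_self]; omega⟩

lemma Phi_nonneg (μ : K → ℝ) (hμ : ∀ k, 0 ≤ μ k) (Ka : I → Finset K) (x : I → ℕ) :
    0 ≤ Phi μ Ka x := by
  suffices H : ∀ n (x : I → ℕ), ∑ m, x m ≤ n → 0 ≤ Phi μ Ka x from H _ x le_rfl
  intro n
  induction n with
  | zero =>
    intro x hx
    have hx0 : x = fun _ => 0 := by
      funext m
      have := Finset.sum_eq_zero_iff.mp (Nat.le_zero.mp hx) m (Finset.mem_univ m)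
      simpa using this
    rw [hx0, Phi_zero]; norm_num
  | succ n ih =>
    intro x hx
    rw [Phi]
    split
    · norm_num
    · apply div_nonneg
      · apply Finset.sum_nonneg
        intro j _
        apply ih
        have hj : 0 < x j.1 := (Finset.mem_filter.mp j.2).2
        have := sum_update_lt x j.1 hj
        omega
      · exact Finset.sum_nonneg fun k _ => hμ k

lemma Phi_rec (μ : K → ℝ) (hμ : ∀ k, 0 < μ k) (Ka : I → Finset K) (hKa : ∀ i, (Ka i).Nonempty)
    (x : I → ℕ) (hx : x ≠ fun _ => 0) :
    (∑ k ∈ (Finset.univ.filter (fun j => 0 < x j)).biUnion Ka, μ k) * Phi μ Ka x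
      = ∑ j ∈ Finset.univ.filter (fun j => 0 < x j),
          Phi μ Ka (Function.update x j (x j - 1)) := by
  have hne : (Finset.univ.filter (fun j : I => 0 < x j)).Nonempty := by
    rcases Function.ne_iff.mp hx with ⟨j, hj⟩
    exact ⟨j, Finset.mem_filter.mpr ⟨Finset.mem_univ j, Nat.pos_of_ne_zero hj⟩⟩
  obtain ⟨j, hj⟩ := hne
  have hbne : ((Finset.univ.filter (fun j : I => 0 < x j)).biUnion Ka).Nonempty := by
    obtain ⟨k, hk⟩ := hKa j
    exact ⟨k, Finset.mem_biUnion.mpr ⟨j, hj, hk⟩⟩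
  have hpos : 0 < ∑ k ∈ (Finset.univ.filter (fun j : I => 0 < x j)).biUnion Ka, μ k :=
    Finset.sum_pos (fun k _ => hμ k) hbne
  rw [Phi, if_neg hx, Finset.sum_attach _ (fun j => Phi μ Ka (Function.update x j (x j - 1))),
    mul_div_cancel₀ _ hpos.ne']
end aux


/-- **Theorem 2 of the paper, per class.** If `G(λ) < ∞` and
`∑_x x_i Φ(x) λ^x < ∞`, the mean number of class-`i` jobs satisfies
`L_i = (λ_i + ∑_{k ∉ 𝒦_i} μ_k ψ_k L_{i|−k}) / (M(K) − Λ(I))`, where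
`ψ_k = ψ / ψ_{|−k}`. -/
theorem mean_jobs_recursion_per_class
    {I K : Type} [Fintype I] [DecidableEq I] [Nonempty I]
    [Fintype K] [DecidableEq K] [Nonempty K]
    (μ : K → ℝ) (hμ : ∀ k, 0 < μ k)
    (Ka : I → Finset K) (hKa : ∀ i, (Ka i).Nonempty) (hcov : ∀ k, ∃ i, k ∈ Ka i)
    (lam : I → ℝ) (hlam : ∀ i, 0 ≤ lam i) (i : I)
    (hG : Summable (fun x : I → ℕ => Phi μ Ka x * ∏ j, lam j ^ x j))
    (hLi : Summable (fun x : I → ℕ => (x i : ℝ) * Phi μ Ka x * ∏ j, lam j ^ x j)) :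
    meanJobs μ Ka lam i =
      (lam i + ∑ k ∈ Finset.univ \ Ka i,
          μ k * ((Gf μ Ka lam)⁻¹ / (Gf μ Ka (lamMinus Ka lam k))⁻¹) *
            meanJobs μ Ka (lamMinus Ka lam k) i) /
        ((∑ k, μ k) - ∑ j, lam j) := by
  classical
  have hΦ : ∀ x, 0 ≤ Phi μ Ka x := Phi_nonneg μ (fun k => (hμ k).le) Ka
  set T : (I → ℕ) → ℝ := fun x => (x i : ℝ) * Phi μ Ka x * ∏ j, lam j ^ x j with hT
  set Tk : K → (I → ℕ) → ℝ :=
    fun k x => (x i : ℝ) * Phi μ Ka x * ∏ j, lamMinus Ka lam k j ^ x j with hTk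
  set hs : I → (I → ℕ) → ℝ := fun j x =>
    if 0 < x j then (x i : ℝ) * Phi μ Ka (Function.update x j (x j - 1)) * ∏ m, lam m ^ x m
    else 0 with hhs
  have hlamM : ∀ k j, 0 ≤ lamMinus Ka lam k j := by
    intro k j; unfold lamMinus
    split
    · exact le_rfl
    · exact hlam j
  have hlamM_le : ∀ k j, lamMinus Ka lam k j ≤ lam j := by
    intro k j; unfold lamMinus
    split
    · exact hlam j
    · exact le_rfl
  have hprod_nonneg : ∀ (l : I → ℝ), (∀ j, 0 ≤ l j) → ∀ x : I → ℕ, 0 ≤ ∏ j, l j ^ x j :=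
    fun l hl x => Finset.prod_nonneg fun j _ => pow_nonneg (hl j) _
  have hT_nonneg : ∀ x, 0 ≤ T x := fun x =>
    mul_nonneg (mul_nonneg (Nat.cast_nonneg _) (hΦ x)) (hprod_nonneg lam hlam x)
  have hTk_nonneg : ∀ k x, 0 ≤ Tk k x := fun k x =>
    mul_nonneg (mul_nonneg (Nat.cast_nonneg _) (hΦ x)) (hprod_nonneg _ (hlamM k) x)
  have hTk_le : ∀ k x, Tk k x ≤ T x := by
    intro k x
    apply mul_le_mul_of_nonneg_left _ (mul_nonneg (Nat.cast_nonneg _) (hΦ x))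
    exact Finset.prod_le_prod (fun j _ => pow_nonneg (hlamM k j) _)
      (fun j _ => pow_le_pow_left₀ (hlamM k j) (hlamM_le k j) _)
  have hLik : ∀ k, Summable (Tk k) :=
    fun k => Summable.of_nonneg_of_le (hTk_nonneg k) (hTk_le k) hLi
  have hFk_le : ∀ k x, Phi μ Ka x * ∏ j, lamMinus Ka lam k j ^ x j
      ≤ Phi μ Ka x * ∏ j, lam j ^ x j := by
    intro k x
    apply mul_le_mul_of_nonneg_left _ (hΦ x)
    exact Finset.prod_le_prod (fun j _ => pow_nonneg (hlamM k j) _)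
      (fun j _ => pow_le_pow_left₀ (hlamM k j) (hlamM_le k j) _)
  have hGk : ∀ k, Summable (fun x : I → ℕ => Phi μ Ka x * ∏ j, lamMinus Ka lam k j ^ x j) :=
    fun k => Summable.of_nonneg_of_le
      (fun x => mul_nonneg (hΦ x) (hprod_nonneg _ (hlamM k) x)) (hFk_le k) hG
  -- G ≥ 1
  have hG1 : ∀ (l : I → ℝ), (∀ j, 0 ≤ l j) →
      Summable (fun x : I → ℕ => Phi μ Ka x * ∏ j, l j ^ x j) → 1 ≤ Gf μ Ka l := by
    intro l hl hsum
    have h0 : Phi μ Ka (fun _ => 0) * ∏ j, l j ^ (0 : ℕ) = 1 := by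
      simp [Phi_zero]
    calc (1:ℝ) = Phi μ Ka (fun _ => 0) * ∏ j, l j ^ ((fun _ => 0) j : ℕ) := by
            simpa using h0.symm
      _ ≤ ∑' x : I → ℕ, Phi μ Ka x * ∏ j, l j ^ x j :=
            Summable.le_tsum hsum _ (fun x _ => mul_nonneg (hΦ x) (hprod_nonneg l hl x))
  have hGr1 : (1:ℝ) ≤ Gf μ Ka lam := hG1 lam hlam hG
  have hGrk1 : ∀ k, (1:ℝ) ≤ Gf μ Ka (lamMinus Ka lam k) := fun k => hG1 _ (hlamM k) (hGk k)
  have hGr0 : Gf μ Ka lam ≠ 0 := (lt_of_lt_of_le one_pos hGr1).ne'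
  have hGrk0 : ∀ k, Gf μ Ka (lamMinus Ka lam k) ≠ 0 :=
    fun k => (lt_of_lt_of_le one_pos (hGrk1 k)).ne'
  -- membership in the union of active servers
  have hUmem : ∀ (k : K) (x : I → ℕ),
      k ∈ (Finset.univ.filter fun j => 0 < x j).biUnion Ka ↔ ∃ j, 0 < x j ∧ k ∈ Ka j := by
    intro k x; simp [Finset.mem_biUnion]
  have hprod_minus_eq : ∀ (k : K) (x : I → ℕ),
      k ∉ (Finset.univ.filter fun j => 0 < x j).biUnion Ka →
      ∏ j, lamMinus Ka lam k j ^ x j = ∏ j, lam j ^ x j := by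
    intro k x hk
    refine Finset.prod_congr rfl fun j _ => ?_
    rcases Nat.eq_zero_or_pos (x j) with h0 | hpos
    · simp [h0]
    · have hkj : k ∉ Ka j := fun hkj => hk ((hUmem k x).mpr ⟨j, hpos, hkj⟩)
      rw [show lamMinus Ka lam k j = lam j from if_neg hkj]
  have hprod_minus_zero : ∀ (k : K) (x : I → ℕ),
      k ∈ (Finset.univ.filter fun j => 0 < x j).biUnion Ka →
      ∏ j, lamMinus Ka lam k j ^ x j = 0 := by
    intro k x hk
    obtain ⟨j, hpos, hkj⟩ := (hUmem k x).mp hk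
    refine Finset.prod_eq_zero (Finset.mem_univ j) ?_
    rw [show lamMinus Ka lam k j = 0 from if_pos hkj]
    exact zero_pow hpos.ne'
  have hTk_ite : ∀ (k : K) (x : I → ℕ),
      (if k ∈ (Finset.univ.filter fun j => 0 < x j).biUnion Ka then 0 else μ k * T x)
        = μ k * Tk k x := by
    intro k x
    by_cases hk : k ∈ (Finset.univ.filter fun j => 0 < x j).biUnion Ka
    · rw [if_pos hk]
      simp [hTk, hprod_minus_zero k x hk]
    · rw [if_neg hk]
      simp only [hT, hTk, hprod_minus_eq k x hk]
  have hTk_Ka : ∀ k, k ∈ Ka i → ∀ x : I → ℕ,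
      (if k ∈ (Finset.univ.filter fun j => 0 < x j).biUnion Ka then 0 else μ k * T x) = 0 := by
    intro k hk x
    by_cases hkx : k ∈ (Finset.univ.filter fun j => 0 < x j).biUnion Ka
    · rw [if_pos hkx]
    · rw [if_neg hkx]
      have hxi : x i = 0 := by
        by_contra hxi
        exact hkx ((hUmem k x).mpr ⟨i, Nat.pos_of_ne_zero hxi, hk⟩)
      simp [hT, hxi]
  -- pointwise master identity
  have master : ∀ x : I → ℕ, (∑ k, μ k) * T x
      = (∑ k ∈ Finset.univ \ Ka i, μ k * Tk k x) + ∑ j, hs j x := by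
    intro x
    by_cases hx : x = fun _ => 0
    · have hxi : x i = 0 := by rw [hx]
      have hT0 : T x = 0 := by simp [hT, hxi]
      have hhs0 : ∀ j, hs j x = 0 := by
        intro j; simp [hhs, hx]
      have hTk0 : ∀ k, Tk k x = 0 := fun k => by simp [hTk, hxi]
      rw [hT0, mul_zero, Finset.sum_congr rfl (fun j _ => hhs0 j), Finset.sum_const_zero,
        Finset.sum_congr rfl (fun k _ => by rw [hTk0 k, mul_zero]), Finset.sum_const_zero]
      norm_num
    · have hstep2 : ∑ j, hs j x
          = (x i : ℝ) * (((∑ k ∈ (Finset.univ.filter fun j => 0 < x j).biUnion Ka, μ k) *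
              Phi μ Ka x)) * ∏ m, lam m ^ x m := by
        simp only [hhs]
        rw [← Finset.sum_filter, ← Finset.sum_mul, ← Finset.mul_sum,
          ← Phi_rec μ hμ Ka hKa x hx]
      have hstep1 : ∑ k ∈ Finset.univ \ Ka i, μ k * Tk k x
          = (∑ k ∈ Finset.univ \ (Finset.univ.filter fun j => 0 < x j).biUnion Ka, μ k) * T x := by
        calc ∑ k ∈ Finset.univ \ Ka i, μ k * Tk k x
            = ∑ k ∈ Finset.univ \ Ka i,
               (if k ∈ (Finset.univ.filter fun j => 0 < x j).biUnion Ka then 0 else μ k * T x) :=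
              Finset.sum_congr rfl fun k _ => (hTk_ite k x).symm
          _ = ∑ k, (if k ∈ (Finset.univ.filter fun j => 0 < x j).biUnion Ka then 0
                else μ k * T x) := by
              refine Finset.sum_subset (Finset.subset_univ _) ?_
              intro k _ hknot
              have hk : k ∈ Ka i := by
                by_contra hkk
                exact hknot (Finset.mem_sdiff.mpr ⟨Finset.mem_univ k, hkk⟩)
              exact hTk_Ka k hk x
          _ = ∑ k ∈ Finset.univ \ (Finset.univ.filter fun j => 0 < x j).biUnion Ka,
                μ k * T x := by
              rw [Finset.sum_ite, Finset.sum_const_zero, zero_add, Finset.sdiff_eq_filter]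
          _ = (∑ k ∈ Finset.univ \ (Finset.univ.filter fun j => 0 < x j).biUnion Ka, μ k)
                * T x := (Finset.sum_mul _ _ _).symm
      have hMsplit : (∑ k, μ k)
          = (∑ k ∈ Finset.univ \ (Finset.univ.filter fun j => 0 < x j).biUnion Ka, μ k)
            + ∑ k ∈ (Finset.univ.filter fun j => 0 < x j).biUnion Ka, μ k :=
        (Finset.sum_sdiff (Finset.subset_univ _)).symm
      rw [hstep1, hstep2, hMsplit]
      simp only [hT]
      ring
  -- shift reindexing
  have hginj : ∀ j : I, Function.Injective (fun y : I → ℕ => Function.update y j (y j + 1)) := by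
    intro j y z hyz
    funext m
    rcases eq_or_ne m j with rfl | hm
    · have := congrFun hyz m; simpa using this
    · have := congrFun hyz m
      simpa [Function.update_of_ne hm] using this
  have hgrange : ∀ (j : I) (x : I → ℕ),
      x ∉ Set.range (fun y : I → ℕ => Function.update y j (y j + 1)) → hs j x = 0 := by
    intro j x hx
    by_cases hj : 0 < x j
    · exfalso
      apply hx
      refine ⟨Function.update x j (x j - 1), ?_⟩
      simp only [Function.update_idem, Function.update_self]
      have : x j - 1 + 1 = x j := by omega
      rw [this, Function.update_eq_self]
    · simp [hhs, hj]
  have hcomp : ∀ (j : I) (y : I → ℕ),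
      hs j (Function.update y j (y j + 1))
        = lam j * (((Function.update y j (y j + 1)) i : ℝ) * Phi μ Ka y * ∏ m, lam m ^ y m) := by
    intro j y
    have h1 : (0:ℕ) < Function.update y j (y j + 1) j := by simp
    have h2 : Function.update (Function.update y j (y j + 1)) j
        (Function.update y j (y j + 1) j - 1) = y := by
      simp only [Function.update_self, Function.update_idem]
      have : y j + 1 - 1 = y j := by omega
      rw [this, Function.update_eq_self]
    have h3 : ∏ m, lam m ^ (Function.update y j (y j + 1) m) = lam j * ∏ m, lam m ^ y m := by
      have h4 : ∀ m, lam m ^ (Function.update y j (y j + 1) m)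
          = Function.update (fun m => lam m ^ y m) j (lam j ^ (y j + 1)) m := by
        intro m
        rcases eq_or_ne m j with rfl | hm
        · simp
        · simp [Function.update_of_ne hm]
      calc ∏ m, lam m ^ (Function.update y j (y j + 1) m)
          = ∏ m, Function.update (fun m => lam m ^ y m) j (lam j ^ (y j + 1)) m :=
            Finset.prod_congr rfl fun m _ => h4 m
        _ = lam j ^ (y j + 1) * ∏ m ∈ Finset.univ \ {j}, lam m ^ y m :=
            Finset.prod_update_of_mem (Finset.mem_univ j) _ _
        _ = lam j ^ (y j + 1) * ∏ m ∈ Finset.univ.erase j, lam m ^ y m := by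
            rw [Finset.sdiff_singleton_eq_erase]
        _ = lam j * (lam j ^ (y j) * ∏ m ∈ Finset.univ.erase j, lam m ^ y m) := by
            rw [pow_succ]; ring
        _ = lam j * ∏ m, lam m ^ y m := by
            rw [Finset.mul_prod_erase Finset.univ (fun m => lam m ^ y m) (Finset.mem_univ j)]
    simp only [hhs]
    rw [if_pos h1, h2, h3]
    ring
  have hcomp2 : ∀ (j : I) (y : I → ℕ),
      hs j (Function.update y j (y j + 1))
        = lam j * T y + (if j = i then lam j * (Phi μ Ka y * ∏ m, lam m ^ y m) else 0) := by
    intro j y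
    rw [hcomp j y]
    rcases eq_or_ne j i with rfl | hj
    · rw [if_pos rfl]
      simp only [Function.update_self, hT]
      push_cast
      ring
    · rw [if_neg hj, Function.update_of_ne (Ne.symm hj)]
      simp only [hT]
      ring
  have hsum_comp : ∀ j : I, Summable (fun y : I → ℕ =>
      lam j * T y + (if j = i then lam j * (Phi μ Ka y * ∏ m, lam m ^ y m) else 0)) := by
    intro j
    apply Summable.add (hLi.mul_left (lam j))
    by_cases hj : j = i
    · simp only [if_pos hj]
      exact hG.mul_left (lam j)
    · simp only [if_neg hj]
      exact summable_zero
  have hsum_shift : ∀ j : I, Summable (hs j) := by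
    intro j
    rw [← Function.Injective.summable_iff (hginj j) (hgrange j)]
    exact (hsum_comp j).congr (fun y => (hcomp2 j y).symm)
  have htsum_shift : ∀ j : I, ∑' x : I → ℕ, hs j x
      = lam j * (∑' x : I → ℕ, T x) + (if j = i then lam j * Gf μ Ka lam else 0) := by
    intro j
    rw [← Function.Injective.tsum_eq (hginj j)
      (Function.support_subset_iff'.mpr (hgrange j))]
    rw [tsum_congr (fun y => hcomp2 j y),
      Summable.tsum_add (hLi.mul_left (lam j)) ?_, tsum_mul_left]
    · congr 1
      by_cases hj : j = i
      · simp only [if_pos hj]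
        rw [tsum_mul_left]
        rfl
      · simp only [if_neg hj, tsum_zero]
    · by_cases hj : j = i
      · simp only [if_pos hj]
        exact hG.mul_left (lam j)
      · simp only [if_neg hj]
        exact summable_zero
  -- summability of the two aggregated families
  have hA : Summable (fun x : I → ℕ => ∑ k ∈ Finset.univ \ Ka i, μ k * Tk k x) :=
    summable_sum (fun k _ => (hLik k).mul_left (μ k))
  have hB : Summable (fun x : I → ℕ => ∑ j, hs j x) :=
    summable_sum (fun j _ => hsum_shift j)
  -- the key balance identity
  have key : (∑ k, μ k) * (∑' x : I → ℕ, T x)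
      = (∑ k ∈ Finset.univ \ Ka i, μ k * ∑' x : I → ℕ, Tk k x)
        + ((∑ j, lam j) * (∑' x : I → ℕ, T x) + lam i * Gf μ Ka lam) := by
    have h1 : (∑ k, μ k) * (∑' x : I → ℕ, T x)
        = ∑' x : I → ℕ, ((∑ k ∈ Finset.univ \ Ka i, μ k * Tk k x) + ∑ j, hs j x) := by
      rw [← tsum_mul_left]
      exact tsum_congr master
    rw [h1, Summable.tsum_add hA hB]
    congr 1
    · rw [Summable.tsum_finsetSum (fun k _ => (hLik k).mul_left (μ k))]
      exact Finset.sum_congr rfl fun k _ => tsum_mul_left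
    · rw [Summable.tsum_finsetSum (fun j _ => hsum_shift j),
        Finset.sum_congr rfl (fun j _ => htsum_shift j), Finset.sum_add_distrib,
        ← Finset.sum_mul, Finset.sum_ite_eq' Finset.univ i (fun j => lam j * Gf μ Ka lam),
        if_pos (Finset.mem_univ i)]
  -- unfold meanJobs
  have hmean : meanJobs μ Ka lam i = (Gf μ Ka lam)⁻¹ * ∑' x : I → ℕ, T x := rfl
  have hmeank : ∀ k, meanJobs μ Ka (lamMinus Ka lam k) i
      = (Gf μ Ka (lamMinus Ka lam k))⁻¹ * ∑' x : I → ℕ, Tk k x := fun k => rfl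
  have hsummand : ∀ k, μ k * ((Gf μ Ka lam)⁻¹ / (Gf μ Ka (lamMinus Ka lam k))⁻¹) *
      meanJobs μ Ka (lamMinus Ka lam k) i
        = μ k * (∑' x : I → ℕ, Tk k x) / Gf μ Ka lam := by
    intro k
    rw [hmeank k]
    field_simp [hGrk0 k]
  rw [hmean, Finset.sum_congr rfl (fun k _ => hsummand k), ← Finset.sum_div]
  by_cases hD : (∑ k, μ k) - ∑ j, lam j = 0
  · have hC_nonneg : 0 ≤ ∑ k ∈ Finset.univ \ Ka i, μ k * ∑' x : I → ℕ, Tk k x :=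
      Finset.sum_nonneg fun k _ => mul_nonneg (hμ k).le (tsum_nonneg (hTk_nonneg k))
    have hkey0 : (∑ k ∈ Finset.univ \ Ka i, μ k * ∑' x : I → ℕ, Tk k x)
        + lam i * Gf μ Ka lam = 0 := by
      have hM : (∑ k, μ k) = ∑ j, lam j := by linarith
      have key' := key
      rw [hM] at key'
      linarith [key']
    have hli0 : lam i = 0 := by
      have h0 : lam i * Gf μ Ka lam = 0 := by linarith [mul_nonneg (hlam i) (by linarith : (0:ℝ) ≤ Gf μ Ka lam)]
      rcases mul_eq_zero.mp h0 with h | h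
      · exact h
      · exact absurd h hGr0
    have hSr0 : (∑' x : I → ℕ, T x) = 0 := by
      have hz : ∀ x : I → ℕ, T x = 0 := by
        intro x
        rcases Nat.eq_zero_or_pos (x i) with h0 | hpos
        · simp [hT, h0]
        · have hp : ∏ j, lam j ^ x j = 0 :=
            Finset.prod_eq_zero (Finset.mem_univ i) (by rw [hli0]; exact zero_pow hpos.ne')
          simp [hT, hp]
      rw [tsum_congr hz, tsum_zero]
    rw [hSr0, mul_zero, hD, div_zero]
  · rw [eq_div_iff hD]
    have hsd : ∑ k ∈ Finset.univ \ Ka i, μ k * (∑' x : I → ℕ, Tk k x)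
        = (∑ k, μ k * (∑' x : I → ℕ, Tk k x)) - ∑ k ∈ Ka i, μ k * (∑' x : I → ℕ, Tk k x) :=
      Finset.sum_sdiff_eq_sub (Finset.subset_univ _)
    have hGG : (Gf μ Ka lam)⁻¹ * Gf μ Ka lam = 1 := inv_mul_cancel₀ hGr0
    linear_combination (Gf μ Ka lam)⁻¹ * key + lam i * hGG
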